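/- Let W ∈ 𝓜 be a branch word, and let A = {(1,0), (0,1)} ∪ {(a,b) ∈ ℤ² : a ≥ 1, b ≥ 1, gcd(a,b) = 1}. Then the map (a,b) ↦ 𝔤 + a·v_SK^W + b·v_TK^W (where 𝔤 = ẽ_{s₀} + ẽ_{t₀} − ẽ_{k₀}) is injective on A, and its image is exactly the set of all vectors of the form g_M^{WX} with M ∈ {K,S,T} and X ∈ 𝓜. -/

import Mathlib

namespace Markov

/-- The ambient space ℝ³. -/
abbrev V3 : Type := Fin 3 → ℝ

/-- Standard basis vectors ẽ₁, ẽ₂, ẽ₃ (indexed by `Fin 3`). -/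
noncomputable def e (i : Fin 3) : V3 := Pi.single i 1

/-- The two generating letters of the free monoid 𝓜. -/
inductive Lt
  | S
  | T
  deriving DecidableEq

/-- Elements of the free monoid 𝓜 on `{S, T}`, as words (lists of letters
read left to right); the monoid operation is `++` and the identity is `[]`. -/
abbrev Word := List Lt

/-- A word is a trunk word iff it consists only of the letter `S`
(otherwise it is a branch word). -/
def IsTrunk (X : Word) : Prop := ∀ l ∈ X, l = Lt.S

/-- Boolean trunk test. -/
def trunkB (X : Word) : Bool := X.all (fun l => decide (l = Lt.S))

/-- One mutation step for the triple `(g_K, g_S, g_T)`; the flag `trunk`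
records whether the word being extended (on the right) is a trunk word. -/
noncomputable def gStep (trunk : Bool) (l : Lt) (v : V3 × V3 × V3) :
    V3 × V3 × V3 :=
  match l with
  | Lt.S => (2 • v.1 - v.2.1, v.1, v.2.2)
  | Lt.T =>
    if trunk then (2 • v.2.1 - v.2.2, v.2.1, v.1)
    else (2 • v.1 - v.2.2, v.1, v.2.1)

/-- Auxiliary recursion computing the g-vectors from the reversed word
(head of the list = last letter of the word). -/
noncomputable def gRev (k s t : Fin 3) : Word → V3 × V3 × V3
  | [] => (2 • e s - e k, e s, e t)
  | l :: X => gStep (trunkB X) l (gRev k s t X)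

/-- The triple of modified g-vectors `(g_K^X, g_S^X, g_T^X)` for the
permutation `(k₀, s₀, t₀) = (k, s, t)` of the indices. -/
noncomputable def g (k s t : Fin 3) (X : Word) : V3 × V3 × V3 :=
  gRev k s t X.reverse

/-- One mutation step for the triple `(c_K, c_S, c_T)`. -/
noncomputable def cStep (trunk : Bool) (l : Lt) (v : V3 × V3 × V3) :
    V3 × V3 × V3 :=
  match l with
  | Lt.S => (-v.2.1, v.1 + 2 • v.2.1, v.2.2)
  | Lt.T =>
    if trunk then (-v.2.2, v.2.1 + 2 • v.2.2, v.1)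
    else (-v.2.2, v.1 + 2 • v.2.2, v.2.1)

noncomputable def cRev (k s t : Fin 3) : Word → V3 × V3 × V3
  | [] => (-(e k), e s + 2 • e k, e t)
  | l :: X => cStep (trunkB X) l (cRev k s t X)

/-- The triple of modified c-vectors `(c_K^X, c_S^X, c_T^X)`. -/
noncomputable def c (k s t : Fin 3) (X : Word) : V3 × V3 × V3 :=
  cRev k s t X.reverse

/-- `g_F^X = g_S^X + g_T^X − g_K^X`. -/
noncomputable def gF (k s t : Fin 3) (X : Word) : V3 :=
  (g k s t X).2.1 + (g k s t X).2.2 - (g k s t X).1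

/-- `v_SK^X = g_K^X − g_S^X`. -/
noncomputable def vSK (k s t : Fin 3) (X : Word) : V3 :=
  (g k s t X).1 - (g k s t X).2.1

/-- `v_TK^X = g_K^X − g_T^X`. -/
noncomputable def vTK (k s t : Fin 3) (X : Word) : V3 :=
  (g k s t X).1 - (g k s t X).2.2

/-- `c_F^X = c_K^X + c_S^X + c_T^X`. -/
noncomputable def cF (k s t : Fin 3) (X : Word) : V3 :=
  (c k s t X).1 + (c k s t X).2.1 + (c k s t X).2.2

/-- `x_SK^X = c_K^X + c_S^X`. -/
noncomputable def xSK (k s t : Fin 3) (X : Word) : V3 :=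
  (c k s t X).1 + (c k s t X).2.1

/-- `x_TK^X = −(c_K^X + c_T^X)`. -/
noncomputable def xTK (k s t : Fin 3) (X : Word) : V3 :=
  -((c k s t X).1 + (c k s t X).2.2)

/-- Closed cone spanned by two vectors. -/
def C2 (v1 v2 : V3) : Set V3 :=
  {x | ∃ la lb : ℝ, 0 ≤ la ∧ 0 ≤ lb ∧ x = la • v1 + lb • v2}

/-- Relatively open cone spanned by two vectors. -/
def C2o (v1 v2 : V3) : Set V3 :=
  {x | ∃ la lb : ℝ, 0 < la ∧ 0 < lb ∧ x = la • v1 + lb • v2}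

/-- Closed cone spanned by three vectors. -/
def C3 (v1 v2 v3 : V3) : Set V3 :=
  {x | ∃ la lb lc : ℝ, 0 ≤ la ∧ 0 ≤ lb ∧ 0 ≤ lc ∧ x = la • v1 + lb • v2 + lc • v3}

/-- Relatively open cone spanned by four vectors. -/
def C4o (v1 v2 v3 v4 : V3) : Set V3 :=
  {x | ∃ la lb lc ld : ℝ, 0 < la ∧ 0 < lb ∧ 0 < lc ∧ 0 < ld ∧
    x = la • v1 + lb • v2 + lc • v3 + ld • v4}

/-- The set `U_∘^X = C°(g_S^X, g_T^X, v_SK^X, v_TK^X)`. -/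
noncomputable def Uo (k s t : Fin 3) (X : Word) : Set V3 :=
  C4o (g k s t X).2.1 (g k s t X).2.2 (vSK k s t X) (vTK k s t X)

/-- The set `U^W = U_∘^W ∪ C(g_S^W, g_T^W)`. -/
noncomputable def Uset (k s t : Fin 3) (W : Word) : Set V3 :=
  Uo k s t W ∪ C2 (g k s t W).2.1 (g k s t W).2.2

/-- Recursion step for the Calkin–Wilf-type coefficients `q`. -/
def qstep (l : Lt) (p : ℤ × ℤ) : ℤ × ℤ :=
  match l with
  | Lt.S => (p.1 + p.2, p.2)
  | Lt.T => (p.2, p.1 + p.2)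

/-- `qfun init X` : the pair obtained from `init` by the recursion
`q^{SX} = (a+b, b)`, `q^{TX} = (b, a+b)` (letters prepended). -/
def qfun (init : ℤ × ℤ) : Word → ℤ × ℤ
  | [] => init
  | l :: X => qstep l (qfun init X)

/-- Recursion step for the coefficients `p`. -/
def pstep (l : Lt) (p : ℤ × ℤ) : ℤ × ℤ :=
  match l with
  | Lt.S => (p.1 + p.2, p.2)
  | Lt.T => (-p.2, -p.1 - p.2)

/-- `pfun init X` : the pair obtained from `init` by the recursion
`p^{SX} = (a+b, b)`, `p^{TX} = (−b, −a−b)` (letters prepended). -/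
def pfun (init : ℤ × ℤ) : Word → ℤ × ℤ
  | [] => init
  | l :: X => pstep l (pfun init X)

/-- The three index data `σ₁ = (1,3,2)`, `σ₂ = (2,1,3)`, `σ₃ = (3,2,1)`
(written with indices `0,1,2` instead of `1,2,3`). -/
def sig : Fin 3 → Fin 3 × Fin 3 × Fin 3 :=
  ![(0, 2, 1), (1, 0, 2), (2, 1, 0)]

/-- Modified g-vectors for the `i`-th subtree of the Markov quiver. -/
noncomputable def gM (i : Fin 3) (X : Word) : V3 × V3 × V3 :=
  g (sig i).1 (sig i).2.1 (sig i).2.2 X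

/-- `𝔤ᵢ = ẽ_{s₀(i)} + ẽ_{t₀(i)} − ẽ_{k₀(i)}`. -/
noncomputable def giFrak (i : Fin 3) : V3 :=
  e (sig i).2.1 + e (sig i).2.2 - e (sig i).1

/-- The set `𝔊ᵢ` of modified g-vectors in the `i`-th subtree. -/
noncomputable def Gset (i : Fin 3) : Set V3 :=
  {v | ∃ a b : ℤ, 1 ≤ a ∧ 1 ≤ b ∧ Int.gcd a b = 1 ∧
      v = giFrak i + (a : ℝ) • (e (sig i).1 - e (sig i).2.2) +
        (b : ℝ) • (e (sig i).2.1 - e (sig i).1)} ∪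
    {e (sig i).2.1}

/-- The support `𝒮` of the G-fan of the Markov quiver. -/
noncomputable def Supp : Set V3 :=
  C3 (e 0) (e 1) (e 2) ∪
    ⋃ (i : Fin 3), ⋃ (X : Word), C3 (gM i X).1 (gM i X).2.1 (gM i X).2.2

/-- The half space `V = {x : x₁+x₂+x₃ > 0} ∪ {0}`. -/
def Vhalf : Set V3 := {x | 0 < x 0 + x 1 + x 2} ∪ {0}

/- ==================== auxiliary development ==================== -/

/-- Coefficient pairs `(p_K, p_S, p_T)` (branch-rule recursion, reversed word). -/
def Qs : Word → (ℤ × ℤ) × (ℤ × ℤ) × (ℤ × ℤ)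
  | [] => ((1,1),(0,1),(1,0))
  | Lt.S :: Y => (2 • (Qs Y).1 - (Qs Y).2.1, (Qs Y).1, (Qs Y).2.2)
  | Lt.T :: Y => (2 • (Qs Y).1 - (Qs Y).2.2, (Qs Y).1, (Qs Y).2.1)

noncomputable def Ff (k s t : Fin 3) (W : Word) (p : ℤ × ℤ) : V3 :=
  (e s + e t - e k) + (p.1 : ℝ) • vSK k s t W + (p.2 : ℝ) • vTK k s t W

lemma trunkB_cons (l : Lt) (L : Word) :
    trunkB (l :: L) = (decide (l = Lt.S) && trunkB L) := by
  simp [trunkB]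

lemma trunkB_append_false {W : Word} (hW : ¬ IsTrunk W) (Y : Word) :
    trunkB (Y ++ W.reverse) = false := by
  rw [← Bool.not_eq_true, trunkB, List.all_eq_true]
  intro h
  apply hW
  intro l hl
  have := h l (by simp [hl])
  simpa using this

lemma gF_aux (k s t : Fin 3) (L : Word) :
    (if trunkB L = true
      then (gRev k s t L).1 + (gRev k s t L).2.2 - (gRev k s t L).2.1
      else (gRev k s t L).2.1 + (gRev k s t L).2.2 - (gRev k s t L).1)
      = e s + e t - e k := by
  induction L with
  | nil =>
    rw [if_pos (by rfl)]
    show (2 • e s - e k) + e t - e s = e s + e t - e k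
    module
  | cons l L ih =>
    have hg : gRev k s t (l :: L) = gStep (trunkB L) l (gRev k s t L) := rfl
    set G := gRev k s t L with hG
    rcases hb : trunkB L with _ | _ <;> rw [hb] at ih hg <;>
      simp only [if_pos, if_neg, Bool.false_eq_true, ite_true, ite_false] at ih
    · -- trunkB L = false
      cases l
      · have hb' : trunkB (Lt.S :: L) = false := by
          simp [trunkB_cons, hb]
        rw [hb', if_neg (by simp), hg]
        show G.1 + G.2.2 - (2 • G.1 - G.2.1) = _
        rw [← ih]; module
      · have hb' : trunkB (Lt.T :: L) = false := by
          simp [trunkB_cons, hb]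
        rw [hb', if_neg (by simp), hg]
        show G.1 + G.2.1 - (2 • G.1 - G.2.2) = _
        rw [← ih]; module
    · -- trunkB L = true
      cases l
      · have hb' : trunkB (Lt.S :: L) = true := by
          simp [trunkB_cons, hb]
        rw [hb', if_pos rfl, hg]
        show (2 • G.1 - G.2.1) + G.2.2 - G.1 = _
        rw [← ih]; module
      · have hb' : trunkB (Lt.T :: L) = false := by
          simp [trunkB_cons, hb]
        rw [hb', if_neg (by simp), hg]
        show G.2.1 + G.1 - (2 • G.2.1 - G.2.2) = _
        rw [← ih]; module

/-- linearity of `Ff` under the mutation combination. -/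
lemma Ff_two_sub (k s t : Fin 3) (W : Word) (p q : ℤ × ℤ) :
    Ff k s t W (2 • p - q) = 2 • Ff k s t W p - Ff k s t W q := by
  have e1 : (((2 • p - q).1 : ℤ) : ℝ) = 2 * (p.1 : ℝ) - (q.1 : ℝ) := by
    rw [Prod.fst_sub, Prod.smul_fst]
    push_cast [nsmul_eq_mul]
    ring
  have e2 : (((2 • p - q).2 : ℤ) : ℝ) = 2 * (p.2 : ℝ) - (q.2 : ℝ) := by
    rw [Prod.snd_sub, Prod.smul_snd]
    push_cast [nsmul_eq_mul]
    ring
  unfold Ff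
  rw [e1, e2]
  module

lemma bridge (k s t : Fin 3) {W : Word} (hW : ¬ IsTrunk W) :
    ∀ Y : Word, gRev k s t (Y ++ W.reverse) =
      (Ff k s t W (Qs Y).1, Ff k s t W (Qs Y).2.1, Ff k s t W (Qs Y).2.2) := by
  intro Y
  induction Y with
  | nil =>
    have hb0 : trunkB W.reverse = false := by
      simpa using trunkB_append_false hW []
    have hg := gF_aux k s t W.reverse
    rw [hb0, if_neg (by simp)] at hg
    rw [List.nil_append]
    have hv1 : vSK k s t W = (gRev k s t W.reverse).1 - (gRev k s t W.reverse).2.1 := rfl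
    have hv2 : vTK k s t W = (gRev k s t W.reverse).1 - (gRev k s t W.reverse).2.2 := rfl
    refine Prod.ext ?_ (Prod.ext ?_ ?_) <;>
      simp only [Qs, Ff, hv1, hv2] <;> push_cast <;> rw [← hg] <;> module
  | cons l Y ih =>
    have hf := trunkB_append_false hW Y
    cases l <;>
      · show gStep (trunkB (Y ++ W.reverse)) _ (gRev k s t (Y ++ W.reverse)) = _
        rw [hf, ih]
        exact Prod.ext (Ff_two_sub k s t W _ _).symm rfl

/-- invariant of `Qs`. -/
def Inv (q : (ℤ × ℤ) × (ℤ × ℤ) × (ℤ × ℤ)) : Prop :=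
  q.1 = q.2.1 + q.2.2 ∧ 0 ≤ q.2.1.1 ∧ 0 ≤ q.2.1.2 ∧ 0 ≤ q.2.2.1 ∧ 0 ≤ q.2.2.2 ∧
  1 ≤ q.2.1.1 + q.2.2.1 ∧ 1 ≤ q.2.1.2 + q.2.2.2 ∧
  (q.2.1.1 * q.2.2.2 - q.2.1.2 * q.2.2.1) * (q.2.1.1 * q.2.2.2 - q.2.1.2 * q.2.2.1) = 1

lemma inv_Qs : ∀ Y : Word, Inv (Qs Y) := by
  intro Y
  induction Y with
  | nil => refine ⟨rfl, ?_⟩; norm_num [Qs]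
  | cons l Y ih =>
    obtain ⟨h1, h2, h3, h4, h5, h6, h7, h8⟩ := ih
    have hK1 : (Qs Y).1.1 = (Qs Y).2.1.1 + (Qs Y).2.2.1 := by rw [h1]; rfl
    have hK2 : (Qs Y).1.2 = (Qs Y).2.1.2 + (Qs Y).2.2.2 := by rw [h1]; rfl
    cases l
    · refine ⟨?_, ?_, ?_, ?_, ?_, ?_, ?_, ?_⟩
      · show 2 • (Qs Y).1 - (Qs Y).2.1 = (Qs Y).1 + (Qs Y).2.2
        rw [h1]; abel
      · show (0:ℤ) ≤ (Qs Y).1.1; omega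
      · show (0:ℤ) ≤ (Qs Y).1.2; omega
      · show (0:ℤ) ≤ (Qs Y).2.2.1; omega
      · show (0:ℤ) ≤ (Qs Y).2.2.2; omega
      · show (1:ℤ) ≤ (Qs Y).1.1 + (Qs Y).2.2.1; omega
      · show (1:ℤ) ≤ (Qs Y).1.2 + (Qs Y).2.2.2; omega
      · show ((Qs Y).1.1 * (Qs Y).2.2.2 - (Qs Y).1.2 * (Qs Y).2.2.1) *
            ((Qs Y).1.1 * (Qs Y).2.2.2 - (Qs Y).1.2 * (Qs Y).2.2.1) = 1
        rw [hK1, hK2]; linear_combination h8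
    · refine ⟨?_, ?_, ?_, ?_, ?_, ?_, ?_, ?_⟩
      · show 2 • (Qs Y).1 - (Qs Y).2.2 = (Qs Y).1 + (Qs Y).2.1
        rw [h1]; abel
      · show (0:ℤ) ≤ (Qs Y).1.1; omega
      · show (0:ℤ) ≤ (Qs Y).1.2; omega
      · show (0:ℤ) ≤ (Qs Y).2.1.1; omega
      · show (0:ℤ) ≤ (Qs Y).2.1.2; omega
      · show (1:ℤ) ≤ (Qs Y).1.1 + (Qs Y).2.1.1; omega
      · show (1:ℤ) ≤ (Qs Y).1.2 + (Qs Y).2.1.2; omega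
      · show ((Qs Y).1.1 * (Qs Y).2.1.2 - (Qs Y).1.2 * (Qs Y).2.1.1) *
            ((Qs Y).1.1 * (Qs Y).2.1.2 - (Qs Y).1.2 * (Qs Y).2.1.1) = 1
        rw [hK1, hK2]; linear_combination h8


lemma indep (k s t : Fin 3) (hks : k ≠ s) (hkt : k ≠ t) (hst : s ≠ t) :
    ∀ (L : Word) (x y : ℝ),
      x • ((gRev k s t L).1 - (gRev k s t L).2.1) +
        y • ((gRev k s t L).1 - (gRev k s t L).2.2) = 0 → x = 0 ∧ y = 0 := by
  intro L
  induction L with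
  | nil =>
    intro x y h
    have hsk : e s k = 0 := by simp [e, Pi.single_apply, hks]
    have hkk : e k k = 1 := by simp [e, Pi.single_apply]
    have htk : e t k = 0 := by simp [e, Pi.single_apply, hkt]
    have hst' : e s t = 0 := by simp [e, Pi.single_apply, hst]
    have hkt' : e k t = 0 := by simp [e, Pi.single_apply, hkt]
    have htt : e t t = 1 := by simp [e, Pi.single_apply]
    have hT := congrFun h t
    have hK := congrFun h k
    have hred : (gRev k s t []) = (e s + e s - e k, e s, e t) := by
      refine Prod.ext ?_ rfl
      show 2 • e s - e k = e s + e s - e k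
      module
    rw [hred] at hT hK
    simp only [Pi.add_apply, Pi.smul_apply, Pi.sub_apply, Pi.zero_apply, smul_eq_mul,
      hsk, hkk, htk, hst', hkt', htt] at hT hK
    constructor <;> linarith
  | cons l L ih =>
    intro x y h
    have hg : gRev k s t (l :: L) = gStep (trunkB L) l (gRev k s t L) := rfl
    rcases hb : trunkB L with _ | _ <;> rw [hb] at hg <;> cases l
    · -- branch, S
      have h' : (x + y) • ((gRev k s t L).1 - (gRev k s t L).2.1) +
          y • ((gRev k s t L).1 - (gRev k s t L).2.2) = 0 := by
        rw [← h, hg]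
        simp only [gStep]
        module
      obtain ⟨h1, h2⟩ := ih (x + y) y h'
      constructor <;> linarith
    · -- branch, T
      have h' : y • ((gRev k s t L).1 - (gRev k s t L).2.1) +
          (x + y) • ((gRev k s t L).1 - (gRev k s t L).2.2) = 0 := by
        rw [← h, hg]
        simp only [gStep, Bool.false_eq_true, if_neg, ite_false]
        module
      obtain ⟨h1, h2⟩ := ih y (x + y) h'
      constructor <;> linarith
    · -- trunk, S
      have h' : (x + y) • ((gRev k s t L).1 - (gRev k s t L).2.1) +
          y • ((gRev k s t L).1 - (gRev k s t L).2.2) = 0 := by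
        rw [← h, hg]
        simp only [gStep]
        module
      obtain ⟨h1, h2⟩ := ih (x + y) y h'
      constructor <;> linarith
    · -- trunk, T
      have h' : (-x - 2*y) • ((gRev k s t L).1 - (gRev k s t L).2.1) +
          (x + y) • ((gRev k s t L).1 - (gRev k s t L).2.2) = 0 := by
        rw [← h, hg]
        simp only [gStep, if_pos, ite_true]
        module
      obtain ⟨h1, h2⟩ := ih (-x - 2*y) (x + y) h'
      constructor <;> linarith

/-- membership in the parameter set `A`. -/
def memA (p : ℤ × ℤ) : Prop :=
  (p = (1, 0) ∨ p = (0, 1)) ∨ (1 ≤ p.1 ∧ 1 ≤ p.2 ∧ Int.gcd p.1 p.2 = 1)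

lemma pair_memA {a : ℤ × ℤ} (h0 : 0 ≤ a.1) (h1 : 0 ≤ a.2)
    (hc : IsCoprime a.1 a.2) : memA a := by
  have hg : Int.gcd a.1 a.2 = 1 := Int.isCoprime_iff_gcd_eq_one.mp hc
  rcases eq_or_lt_of_le h0 with h | h
  · left; right
    rw [← h, Int.gcd_zero_left] at hg
    have : a.2 = 1 := by omega
    exact Prod.ext h.symm this
  · rcases eq_or_lt_of_le h1 with h' | h'
    · left; left
      rw [← h', Int.gcd_zero_right] at hg
      have : a.1 = 1 := by omega
      exact Prod.ext this h'.symm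
    · right; exact ⟨h, h', hg⟩

lemma inv_memA (Y : Word) : memA (Qs Y).1 ∧ memA (Qs Y).2.1 ∧ memA (Qs Y).2.2 := by
  obtain ⟨h1, h2, h3, h4, h5, h6, h7, h8⟩ := inv_Qs Y
  have hK1 : (Qs Y).1.1 = (Qs Y).2.1.1 + (Qs Y).2.2.1 := by rw [h1]; rfl
  have hK2 : (Qs Y).1.2 = (Qs Y).2.1.2 + (Qs Y).2.2.2 := by rw [h1]; rfl
  refine ⟨?_, ?_, ?_⟩
  · right
    refine ⟨by omega, by omega, Int.isCoprime_iff_gcd_eq_one.mp ?_⟩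
    refine ⟨((Qs Y).2.1.1 * (Qs Y).2.2.2 - (Qs Y).2.1.2 * (Qs Y).2.2.1) * (Qs Y).2.2.2,
      -(((Qs Y).2.1.1 * (Qs Y).2.2.2 - (Qs Y).2.1.2 * (Qs Y).2.2.1) * (Qs Y).2.2.1), ?_⟩
    rw [hK1, hK2]; linear_combination h8
  · refine pair_memA h2 h3 ?_
    refine ⟨((Qs Y).2.1.1 * (Qs Y).2.2.2 - (Qs Y).2.1.2 * (Qs Y).2.2.1) * (Qs Y).2.2.2,
      -(((Qs Y).2.1.1 * (Qs Y).2.2.2 - (Qs Y).2.1.2 * (Qs Y).2.2.1) * (Qs Y).2.2.1), ?_⟩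
    linear_combination h8
  · refine pair_memA h4 h5 ?_
    refine ⟨-(((Qs Y).2.1.1 * (Qs Y).2.2.2 - (Qs Y).2.1.2 * (Qs Y).2.2.1) * (Qs Y).2.1.2),
      ((Qs Y).2.1.1 * (Qs Y).2.2.2 - (Qs Y).2.1.2 * (Qs Y).2.2.1) * (Qs Y).2.1.1, ?_⟩
    linear_combination h8

lemma qs_surj : ∀ n : ℕ, ∀ α β : ℤ, ∀ Y : Word, 1 ≤ α → 1 ≤ β → α + β ≤ (n : ℤ) →
    ∀ a b : ℤ, a = α * (Qs Y).2.1.1 + β * (Qs Y).2.2.1 →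
      b = α * (Qs Y).2.1.2 + β * (Qs Y).2.2.2 →
      Int.gcd a b = 1 → ∃ Y', (Qs Y').1 = (a, b) := by
  intro n
  induction n with
  | zero => intro α β Y hα hβ hn; intros; exfalso; omega
  | succ n ih =>
    intro α β Y hα hβ hn a b ha hb hg
    obtain ⟨h1, h2, h3, h4, h5, h6, h7, h8⟩ := inv_Qs Y
    have hK1 : (Qs Y).1.1 = (Qs Y).2.1.1 + (Qs Y).2.2.1 := by rw [h1]; rfl
    have hK2 : (Qs Y).1.2 = (Qs Y).2.1.2 + (Qs Y).2.2.2 := by rw [h1]; rfl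
    rcases lt_trichotomy α β with hlt | heq | hgt
    · refine ih α (β - α) (Lt.S :: Y) hα (by omega) (by push_cast at hn ⊢; omega) a b ?_ ?_ hg
      · show a = α * (Qs Y).1.1 + (β - α) * (Qs Y).2.2.1
        rw [hK1, ha]; ring
      · show b = α * (Qs Y).1.2 + (β - α) * (Qs Y).2.2.2
        rw [hK2, hb]; ring
    · subst heq
      have ha' : a = α * (Qs Y).1.1 := by rw [hK1, ha]; ring
      have hb' : b = α * (Qs Y).1.2 := by rw [hK2, hb]; ring
      have hmul : α.natAbs * Int.gcd (Qs Y).1.1 (Qs Y).1.2 = 1 := by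
        rw [← Int.gcd_mul_left, ← ha', ← hb', hg]
      have hα1 : α = 1 := by
        have := Nat.eq_one_of_mul_eq_one_right hmul
        omega
      refine ⟨Y, ?_⟩
      rw [ha', hb', hα1]
      exact Prod.ext (by ring) (by ring)
    · refine ih β (α - β) (Lt.T :: Y) hβ (by omega) (by push_cast at hn ⊢; omega) a b ?_ ?_ hg
      · show a = β * (Qs Y).1.1 + (α - β) * (Qs Y).2.1.1
        rw [hK1, ha]; ring
      · show b = β * (Qs Y).1.2 + (α - β) * (Qs Y).2.1.2
        rw [hK2, hb]; ring


/-- coprime parameterization of all g-vectors in a branch. -/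
theorem stmt_12 (k s t : Fin 3) (hks : k ≠ s) (hkt : k ≠ t) (hst : s ≠ t)
    (W : Word) (hW : ¬ IsTrunk W) :
    Set.InjOn
      (fun p : ℤ × ℤ => (e s + e t - e k) + (p.1 : ℝ) • vSK k s t W +
        (p.2 : ℝ) • vTK k s t W)
      (({((1 : ℤ), (0 : ℤ)), ((0 : ℤ), (1 : ℤ))} : Set (ℤ × ℤ)) ∪
        {p : ℤ × ℤ | 1 ≤ p.1 ∧ 1 ≤ p.2 ∧ Int.gcd p.1 p.2 = 1}) ∧
    (fun p : ℤ × ℤ => (e s + e t - e k) + (p.1 : ℝ) • vSK k s t W +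
        (p.2 : ℝ) • vTK k s t W) ''
      (({((1 : ℤ), (0 : ℤ)), ((0 : ℤ), (1 : ℤ))} : Set (ℤ × ℤ)) ∪
        {p : ℤ × ℤ | 1 ≤ p.1 ∧ 1 ≤ p.2 ∧ Int.gcd p.1 p.2 = 1}) =
      {v : V3 | ∃ X : Word,
        v = (g k s t (W ++ X)).1 ∨ v = (g k s t (W ++ X)).2.1 ∨
          v = (g k s t (W ++ X)).2.2} := by
  have hb := bridge k s t hW
  constructor
  · -- injectivity
    intro p _ q _ hpq
    simp only at hpq
    have h' : (p.1 : ℝ) • vSK k s t W + (p.2 : ℝ) • vTK k s t W =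
        (q.1 : ℝ) • vSK k s t W + (q.2 : ℝ) • vTK k s t W := by
      rw [add_assoc, add_assoc] at hpq
      exact add_left_cancel hpq
    have h0 : ((p.1 : ℝ) - q.1) • vSK k s t W + ((p.2 : ℝ) - q.2) • vTK k s t W = 0 := by
      rw [sub_smul, sub_smul, sub_add_sub_comm, h', sub_self]
    obtain ⟨e1, e2⟩ := indep k s t hks hkt hst W.reverse _ _ h0
    have hp1 : p.1 = q.1 := by exact_mod_cast sub_eq_zero.mp e1
    have hp2 : p.2 = q.2 := by exact_mod_cast sub_eq_zero.mp e2
    exact Prod.ext hp1 hp2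
  · ext v
    simp only [Set.mem_image, Set.mem_union, Set.mem_insert_iff, Set.mem_singleton_iff,
      Set.mem_setOf_eq]
    constructor
    · rintro ⟨p, hp, rfl⟩
      rcases hp with (rfl | rfl) | ⟨ha, hb2, hgcd⟩
      · refine ⟨[], Or.inr (Or.inr ?_)⟩
        have h0 := hb []
        rw [List.nil_append] at h0
        rw [List.append_nil]
        show Ff k s t W ((1 : ℤ), (0 : ℤ)) = (gRev k s t W.reverse).2.2
        rw [h0]
        rfl
      · refine ⟨[], Or.inr (Or.inl ?_)⟩
        have h0 := hb []
        rw [List.nil_append] at h0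
        rw [List.append_nil]
        show Ff k s t W ((0 : ℤ), (1 : ℤ)) = (gRev k s t W.reverse).2.1
        rw [h0]
        rfl
      · obtain ⟨Y', hY'⟩ := qs_surj (p.1 + p.2).toNat p.2 p.1 [] hb2 ha (by omega)
          p.1 p.2 (by show p.1 = p.2 * 0 + p.1 * 1; ring)
          (by show p.2 = p.2 * 1 + p.1 * 0; ring) hgcd
        refine ⟨Y'.reverse, Or.inl ?_⟩
        show Ff k s t W p = (gRev k s t (W ++ Y'.reverse).reverse).1
        rw [List.reverse_append, List.reverse_reverse, hb Y', hY']
    · rintro ⟨X, hX⟩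
      have h0 := hb X.reverse
      have hrw : gRev k s t ((W ++ X).reverse) =
          (Ff k s t W (Qs X.reverse).1, Ff k s t W (Qs X.reverse).2.1,
            Ff k s t W (Qs X.reverse).2.2) := by
        rw [List.reverse_append]; exact h0
      obtain ⟨m1, m2, m3⟩ := inv_memA X.reverse
      rcases hX with h | h | h
      · refine ⟨(Qs X.reverse).1, ?_, ?_⟩
        · rcases m1 with (h' | h') | h'
          · exact Or.inl (Or.inl h')
          · exact Or.inl (Or.inr h')
          · exact Or.inr h'
        · rw [h]
          show Ff k s t W (Qs X.reverse).1 = (gRev k s t (W ++ X).reverse).1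
          rw [hrw]
      · refine ⟨(Qs X.reverse).2.1, ?_, ?_⟩
        · rcases m2 with (h' | h') | h'
          · exact Or.inl (Or.inl h')
          · exact Or.inl (Or.inr h')
          · exact Or.inr h'
        · rw [h]
          show Ff k s t W (Qs X.reverse).2.1 = (gRev k s t (W ++ X).reverse).2.1
          rw [hrw]
      · refine ⟨(Qs X.reverse).2.2, ?_, ?_⟩
        · rcases m3 with (h' | h') | h'
          · exact Or.inl (Or.inl h')
          · exact Or.inl (Or.inr h')
          · exact Or.inr h'
        · rw [h]
          show Ff k s t W (Qs X.reverse).2.2 = (gRev k s t (W ++ X).reverse).2.2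
          rw [hrw]



end Markov
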